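/- Let G be a disperse ℓ-uniform hypergraph (ℓ ≥ 3), let B ⊆ V(G) with |B| = ℓ, and let A₁, A₂ ⊆ B be distinct (ℓ−1)-subsets. If A₁ and A₂ belong to the same tight component of G, then every (ℓ−1)-subset of B belongs to that tight component. -/

import Mathlib

open Finset

/-- An `ℓ`-uniform hypergraph (given by its edge set `E`) is disperse if every
`(ℓ+1)`-set of vertices induces `0`, `1`, `ℓ` or `ℓ+1` edges. -/
def Disperse {V : Type*} [DecidableEq V] (ℓ : ℕ) (E : Finset (Finset V)) : Prop :=
  ∀ X : Finset V, X.card = ℓ + 1 →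
    (E.filter (· ⊆ X)).card = 0 ∨ (E.filter (· ⊆ X)).card = 1 ∨
    (E.filter (· ⊆ X)).card = ℓ ∨ (E.filter (· ⊆ X)).card = ℓ + 1

/-- Edge set of the link of a vertex `v`: all `(ℓ-1)`-sets `e` with `e ∪ {v} ∈ E`. -/
def linkEdges {V : Type*} [DecidableEq V] (E : Finset (Finset V)) (v : V) :
    Finset (Finset V) :=
  (E.filter (fun e => v ∈ e)).image (fun e => e.erase v)

/-- `A` and `B` are connected by a tight walk in the `k`-uniform hypergraph with
edge set `E`: there is a sequence of edges, consecutive ones sharing at least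
`k - 1` vertices, whose first edge contains `A` and last edge contains `B`. -/
def TightConn {V : Type*} [DecidableEq V] (k : ℕ) (E : Finset (Finset V))
    (A B : Finset V) : Prop :=
  ∃ es : List (Finset V), ∃ h : es ≠ [],
    (∀ e ∈ es, e ∈ E) ∧ es.Chain' (fun a b => k - 1 ≤ (a ∩ b).card) ∧
    A ⊆ es.head h ∧ B ⊆ es.getLast h

lemma inter_card_ge {V : Type*} [DecidableEq V] {ℓ : ℕ} {X a b : Finset V}
    (hX : X.card = ℓ+1) (ha : a ⊆ X) (hb : b ⊆ X)
    (hac : a.card = ℓ) (hbc : b.card = ℓ) : ℓ - 1 ≤ (a ∩ b).card := by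
  have h1 : (a ∪ b).card ≤ ℓ+1 := hX ▸ card_le_card (union_subset ha hb)
  have h2 := card_union_add_card_inter a b
  omega

lemma two_of {V : Type*} [DecidableEq V] {ℓ : ℕ} {E : Finset (Finset V)} (hℓ : 3 ≤ ℓ)
    (hunif : ∀ e ∈ E, e.card = ℓ) (hdisp : Disperse ℓ E)
    {X g₁ g₂ Z₁ Z₂ : Finset V}
    (hX : X.card = ℓ+1) (hg₁E : g₁ ∈ E) (hg₂E : g₂ ∈ E) (hgne : g₁ ≠ g₂)
    (hg₁ : g₁ ⊆ X) (hg₂ : g₂ ⊆ X)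
    (hZ₁ : Z₁ ⊆ X) (hZ₂ : Z₂ ⊆ X) (hZ₁c : Z₁.card = ℓ) (hZ₂c : Z₂.card = ℓ)
    (hZne : Z₁ ≠ Z₂) : Z₁ ∈ E ∨ Z₂ ∈ E := by
  by_contra hcon
  push_neg at hcon
  obtain ⟨h1, h2⟩ := hcon
  have hsub : E.filter (· ⊆ X) ⊆ (X.powersetCard ℓ) \ {Z₁, Z₂} := by
    intro e he
    rw [mem_filter] at he
    rw [mem_sdiff, mem_powersetCard]
    refine ⟨⟨he.2, hunif e he.1⟩, ?_⟩
    simp only [mem_insert, mem_singleton]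
    rintro (rfl|rfl)
    · exact h1 he.1
    · exact h2 he.1
  have hcard2 : ({Z₁, Z₂} : Finset (Finset V)) ⊆ X.powersetCard ℓ := by
    intro e he
    simp only [mem_insert, mem_singleton] at he
    rcases he with rfl|rfl <;> rw [mem_powersetCard]
    · exact ⟨hZ₁, hZ₁c⟩
    · exact ⟨hZ₂, hZ₂c⟩
  have hps : (X.powersetCard ℓ).card = ℓ + 1 := by
    rw [card_powersetCard, hX, Nat.choose_succ_self_right]
  have hpair : ({Z₁, Z₂} : Finset (Finset V)).card = 2 := card_pair hZne
  have hle : (E.filter (· ⊆ X)).card ≤ ℓ - 1 := by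
    calc (E.filter (· ⊆ X)).card ≤ ((X.powersetCard ℓ) \ {Z₁, Z₂}).card := card_le_card hsub
    _ = (ℓ+1) - 2 := by rw [card_sdiff_of_subset hcard2, hps, hpair]
    _ ≤ ℓ - 1 := by omega
  have hge : 2 ≤ (E.filter (· ⊆ X)).card := by
    have hss : ({g₁, g₂} : Finset (Finset V)) ⊆ E.filter (· ⊆ X) := by
      intro e he
      simp only [mem_insert, mem_singleton] at he
      rcases he with rfl|rfl <;> rw [mem_filter]
      · exact ⟨hg₁E, hg₁⟩
      · exact ⟨hg₂E, hg₂⟩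
    calc 2 = ({g₁, g₂} : Finset (Finset V)).card := (card_pair hgne).symm
    _ ≤ _ := card_le_card hss
  rcases hdisp X hX with h|h|h|h <;> omega

lemma spread {V : Type*} [DecidableEq V] {ℓ : ℕ} {E : Finset (Finset V)} (hℓ : 3 ≤ ℓ)
    (hunif : ∀ e ∈ E, e.card = ℓ) (hdisp : Disperse ℓ E)
    {X W D₁ D' : Finset V} {x b : V}
    (hx : x ∉ X)
    (HB : ∀ D ⊆ X, D.card = ℓ - 1 → insert x D ∈ E → b ∈ D)
    (hWE : W ∈ E) (hWX : W ⊆ X) (hbW : b ∈ W)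
    (hD₁ : D₁ ⊆ W) (hD₁c : D₁.card = ℓ - 1) (hD₁E : insert x D₁ ∈ E)
    (hD' : D' ⊆ W) (hD'c : D'.card = ℓ - 1) (hbD' : b ∈ D') : insert x D' ∈ E := by
  have hxW : x ∉ W := fun h => hx (hWX h)
  have hWc : W.card = ℓ := hunif W hWE
  have hYc : (insert x W).card = ℓ + 1 := by rw [card_insert_of_notMem hxW, hWc]
  have hxD₁ : x ∉ D₁ := fun h => hxW (hD₁ h)
  have hxD' : x ∉ D' := fun h => hxW (hD' h)
  have hxWb : x ∉ W.erase b := fun h => hxW (erase_subset _ _ h)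
  have hWbX : W.erase b ⊆ X := (erase_subset _ _).trans hWX
  have hWbc : (W.erase b).card = ℓ - 1 := by rw [card_erase_of_mem hbW, hWc]
  have hne2 : insert x D' ≠ insert x (W.erase b) := by
    intro h
    have : D' = W.erase b := by
      have h1 : D' = (insert x D').erase x := by rw [erase_insert hxD']
      have h2 : W.erase b = (insert x (W.erase b)).erase x := by rw [erase_insert hxWb]
      rw [h1, h2, h]
    exact (notMem_erase b W) (this ▸ hbD')
  have hgne : W ≠ insert x D₁ := by
    intro h
    exact hxW (h ▸ mem_insert_self x D₁)
  have := two_of hℓ hunif hdisp hYc hWE hD₁E hgne (subset_insert x W)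
    (insert_subset_insert x hD₁)
    (insert_subset_insert x hD') (insert_subset_insert x ((erase_subset _ _)))
    (by rw [card_insert_of_notMem hxD', hD'c]; omega)
    (by rw [card_insert_of_notMem hxWb, hWbc]; omega)
    hne2
  rcases this with h|h
  · exact h
  · exact absurd (HB (W.erase b) hWbX hWbc h) (notMem_erase b W)

lemma lemD {V : Type*} [DecidableEq V] {ℓ : ℕ} {E : Finset (Finset V)} (hℓ : 3 ≤ ℓ)
    (hunif : ∀ e ∈ E, e.card = ℓ) (hdisp : Disperse ℓ E)
    {X f f' D₀ : Finset V} {x b : V}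
    (hX : X.card = ℓ + 1) (hfE : f ∈ E) (hf'E : f' ∈ E) (hff' : f ≠ f')
    (hfX : f ⊆ X) (hf'X : f' ⊆ X) (hx : x ∉ X) (hbX : b ∈ X)
    (hD₀X : D₀ ⊆ X) (hD₀c : D₀.card = ℓ - 1) (hD₀E : insert x D₀ ∈ E)
    (HB : ∀ D ⊆ X, D.card = ℓ - 1 → insert x D ∈ E → b ∈ D) :
    ∀ S ⊆ X, S.card = ℓ - 2 → b ∉ S → insert x (insert b S) ∈ E := by
  have hbD₀ : b ∈ D₀ := HB D₀ hD₀X hD₀c hD₀E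
  -- C1: at most one non-edge among ℓ-subsets
  have C1 : ∀ u v : V, u ∈ X → v ∈ X → u ≠ v → (X.erase u ∈ E ∨ X.erase v ∈ E) := by
    intro u v hu hv huv
    have hcu : (X.erase u).card = ℓ := by rw [card_erase_of_mem hu, hX]; omega
    have hcv : (X.erase v).card = ℓ := by rw [card_erase_of_mem hv, hX]; omega
    have hne : X.erase u ≠ X.erase v := by
      intro h
      have : v ∈ X.erase u := mem_erase.mpr ⟨huv.symm, hv⟩
      rw [h] at this
      exact (notMem_erase v X) this
    exact two_of hℓ hunif hdisp hX hfE hf'E hff' hfX hf'X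
      (erase_subset _ _) (erase_subset _ _) hcu hcv hne
  -- choose w ∈ X \ D₀ with X.erase w an edge
  obtain ⟨w, hwX, hwD₀, hWE⟩ : ∃ w, w ∈ X ∧ w ∉ D₀ ∧ X.erase w ∈ E := by
    have hc : (X \ D₀).card = 2 := by rw [card_sdiff_of_subset hD₀X, hX, hD₀c]; omega
    obtain ⟨p, q, hpq, hpair⟩ := card_eq_two.mp hc
    have hp : p ∈ X \ D₀ := by rw [hpair]; exact mem_insert_self p {q}
    have hq : q ∈ X \ D₀ := by rw [hpair]; exact mem_insert_of_mem (mem_singleton_self q)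
    rw [mem_sdiff] at hp hq
    rcases C1 p q hp.1 hq.1 hpq with h|h
    · exact ⟨p, hp.1, hp.2, h⟩
    · exact ⟨q, hq.1, hq.2, h⟩
  have hbw : b ≠ w := fun h => hwD₀ (h ▸ hbD₀)
  have hbXw : b ∈ X.erase w := mem_erase.mpr ⟨hbw, hbX⟩
  have fam1 : ∀ γ ∈ X, γ ≠ b → γ ≠ w → insert x ((X.erase w).erase γ) ∈ E := by
    intro γ hγ hγb hγw
    have hγWw : γ ∈ X.erase w := mem_erase.mpr ⟨hγw, hγ⟩
    refine spread hℓ hunif hdisp hx HB hWE (erase_subset _ _) hbXw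
      (fun t ht => mem_erase.mpr ⟨fun h => hwD₀ (h ▸ ht), hD₀X ht⟩) hD₀c hD₀E
      (erase_subset _ _) ?_ (mem_erase.mpr ⟨fun h => hγb h.symm, hbXw⟩)
    · rw [card_erase_of_mem hγWw, card_erase_of_mem hwX, hX]; omega
  have aux2 : ∀ u v : V, u ∈ X → v ∈ X → u ≠ v → u ≠ b → v ≠ b → X.erase u ∈ E →
      insert x ((X.erase u).erase v) ∈ E := by
    intro u v hu hv huv hub hvb huE
    by_cases huw : u = w
    · subst huw
      exact fam1 v hv hvb (fun h => huv h.symm)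
    · have hD₂ := fam1 u hu hub huw
      have hbXu : b ∈ X.erase u := mem_erase.mpr ⟨fun h => hub h.symm, hbX⟩
      refine spread hℓ hunif hdisp hx HB huE (erase_subset _ _) hbXu
        (fun t ht => ?_) ?_ hD₂ (erase_subset _ _) ?_ ?_
      · rw [mem_erase] at ht ⊢
        rw [mem_erase] at ht
        exact ⟨ht.1, ht.2.2⟩
      · rw [card_erase_of_mem (mem_erase.mpr ⟨huw, hu⟩), card_erase_of_mem hwX, hX]; omega
      · rw [card_erase_of_mem (mem_erase.mpr ⟨fun h => huv h.symm, hv⟩),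
          card_erase_of_mem hu, hX]
        omega
      · exact mem_erase.mpr ⟨fun h => hvb h.symm, hbXu⟩
  intro S hSX hSc hbS
  have hbsub : insert b S ⊆ X := insert_subset hbX hSX
  have hcardbs : (insert b S).card = ℓ - 1 := by rw [card_insert_of_notMem hbS, hSc]; omega
  have hc2 : (X \ insert b S).card = 2 := by rw [card_sdiff_of_subset hbsub, hX, hcardbs]; omega
  obtain ⟨u, v, huv, hpair⟩ := card_eq_two.mp hc2
  have hu : u ∈ X ∧ u ∉ insert b S := by
    have : u ∈ X \ insert b S := by rw [hpair]; exact mem_insert_self u {v}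
    exact mem_sdiff.mp this
  have hv : v ∈ X ∧ v ∉ insert b S := by
    have : v ∈ X \ insert b S := by rw [hpair]; exact mem_insert_of_mem (mem_singleton_self v)
    exact mem_sdiff.mp this
  have hub : u ≠ b := fun h => hu.2 (h ▸ mem_insert_self b S)
  have hvb : v ≠ b := fun h => hv.2 (h ▸ mem_insert_self b S)
  have heq : insert b S = (X.erase u).erase v := by
    apply eq_of_subset_of_card_le
    · intro a ha
      refine mem_erase.mpr ⟨fun h => hv.2 (h ▸ ha), mem_erase.mpr ⟨fun h => hu.2 (h ▸ ha), hbsub ha⟩⟩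
    · rw [card_erase_of_mem (mem_erase.mpr ⟨huv.symm, hv.1⟩), card_erase_of_mem hu.1, hX,
        hcardbs]
      omega
  rcases C1 u v hu.1 hv.1 huv with h|h
  · rw [heq]; exact aux2 u v hu.1 hv.1 huv hub hvb h
  · rw [heq, erase_right_comm]
    exact aux2 v u hv.1 hu.1 huv.symm hvb hub h

def InvG {V : Type*} [DecidableEq V] (ℓ : ℕ) (E : Finset (Finset V)) (x : V)
    (f : Finset V) : Prop :=
  (∃ h ∈ E, x ∈ h ∧ ℓ - 1 ≤ (h ∩ f).card) ∨
  (x ∉ f ∧ ∃ b, b ∉ f ∧ b ≠ x ∧ ∀ S ⊆ f, S.card = ℓ - 2 → insert x (insert b S) ∈ E)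

lemma step {V : Type*} [DecidableEq V] {ℓ : ℕ} {E : Finset (Finset V)} (hℓ : 3 ≤ ℓ)
    (hunif : ∀ e ∈ E, e.card = ℓ) (hdisp : Disperse ℓ E) {x : V} {f f' : Finset V}
    (hfE : f ∈ E) (hf'E : f' ∈ E) (hint : ℓ - 1 ≤ (f ∩ f').card)
    (hInv : InvG ℓ E x f') : InvG ℓ E x f := by
  by_cases hxf : x ∈ f
  · exact Or.inl ⟨f, hfE, hxf, by rw [inter_self]; have := hunif f hfE; omega⟩
  by_cases hff' : f = f'
  · subst hff'; exact hInv
  have hfc : f.card = ℓ := hunif f hfE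
  have hf'c : f'.card = ℓ := hunif f' hf'E
  have hic : (f ∩ f').card = ℓ - 1 := by
    have h1 : (f ∩ f').card ≤ ℓ := hfc ▸ card_le_card inter_subset_left
    by_contra hcon
    have h2 : f ∩ f' = f := eq_of_subset_of_card_le inter_subset_left (by omega)
    have h4 : f ⊆ f' := by rw [← h2]; exact inter_subset_right
    exact hff' (eq_of_subset_of_card_le h4 (by omega))
  have hXc : (f ∪ f').card = ℓ + 1 := by
    have := card_union_add_card_inter f f'; omega
  have hfX : f ⊆ f ∪ f' := subset_union_left
  have hf'X : f' ⊆ f ∪ f' := subset_union_right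
  obtain ⟨bp, hbp⟩ : ∃ bp, f' \ f = {bp} := by
    apply card_eq_one.mp
    have := card_sdiff_add_card_inter f' f
    rw [inter_comm] at this; omega
  have hbpm : bp ∈ f' \ f := hbp ▸ mem_singleton_self bp
  have hbpf' : bp ∈ f' := (mem_sdiff.mp hbpm).1
  have hbpf : bp ∉ f := (mem_sdiff.mp hbpm).2
  have hsubf : ∀ D : Finset V, D ⊆ f ∪ f' → bp ∉ D → D ⊆ f := by
    intro D hDX hbpD t ht
    rcases mem_union.mp (hDX ht) with h|h
    · exact h
    · by_contra hc
      have ht' : t ∈ f' \ f := mem_sdiff.mpr ⟨h, hc⟩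
      rw [hbp, mem_singleton] at ht'
      exact hbpD (ht' ▸ ht)
  rcases hInv with ⟨h, hhE, hxh, hhf'⟩ | ⟨hxf', b, hbf', hbx, fam⟩
  -- CASE D1
  · by_cases hxX : x ∈ f ∪ f'
    · have hxf' : x ∈ f' := by
        rcases mem_union.mp hxX with h'|h'
        · exact absurd h' hxf
        · exact h'
      exact Or.inl ⟨f', hf'E, hxf', by rw [inter_comm]; omega⟩
    · have hxf' : x ∉ f' := fun h' => hxX (hf'X h')
      have hhc : h.card = ℓ := hunif h hhE
      have hc : (h.erase x).card = ℓ - 1 := by rw [card_erase_of_mem hxh, hhc]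
      have hsub : h ∩ f' ⊆ h.erase x := by
        intro t ht; rw [mem_inter] at ht
        exact mem_erase.mpr ⟨fun hh => hxf' (hh ▸ ht.2), ht.1⟩
      have heq : h ∩ f' = h.erase x := eq_of_subset_of_card_le hsub (by omega)
      have hDhf' : h.erase x ⊆ f' := by rw [← heq]; exact inter_subset_right
      have hDhX : h.erase x ⊆ f ∪ f' := hDhf'.trans hf'X
      have hattach : insert x (h.erase x) ∈ E := by rw [insert_erase hxh]; exact hhE
      by_cases HB : ∀ D ⊆ f ∪ f', D.card = ℓ - 1 → insert x D ∈ E → bp ∈ D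
      · refine Or.inr ⟨hxf, bp, hbpf, fun h' => hxX (h' ▸ hf'X hbpf'), ?_⟩
        intro S hS hSc
        exact lemD hℓ hunif hdisp hXc hfE hf'E hff' hfX hf'X hxX (hf'X hbpf')
          hDhX hc hattach HB S (hS.trans hfX) hSc (fun hbS => hbpf (hS hbS))
      · push_neg at HB
        obtain ⟨D, hDX, hDc, hDE, hbpD⟩ := HB
        refine Or.inl ⟨insert x D, hDE, mem_insert_self x D, ?_⟩
        have hDf : D ⊆ f := hsubf D hDX hbpD
        have hsub2 : D ⊆ insert x D ∩ f := subset_inter (subset_insert x D) hDf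
        calc ℓ - 1 = D.card := hDc.symm
        _ ≤ _ := card_le_card hsub2
  -- CASE D2
  · by_cases hbf : b ∈ f
    · obtain ⟨z, hz⟩ : (f ∩ f').Nonempty := card_pos.mp (by omega)
      have hS₀ : (f ∩ f').erase z ⊆ f ∩ f' := erase_subset _ _
      have hS₀c : ((f ∩ f').erase z).card = ℓ - 2 := by
        rw [card_erase_of_mem hz, hic]; omega
      have hedge := fam _ (hS₀.trans inter_subset_right) hS₀c
      refine Or.inl ⟨_, hedge, mem_insert_self _ _, ?_⟩
      have hbS₀ : b ∉ (f ∩ f').erase z := fun h' => hbf' (inter_subset_right (hS₀ h'))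
      have hsub2 : insert b ((f ∩ f').erase z) ⊆ insert x (insert b ((f ∩ f').erase z)) ∩ f :=
        subset_inter (subset_insert _ _) (insert_subset hbf (hS₀.trans inter_subset_left))
      calc ℓ - 1 = (insert b ((f ∩ f').erase z)).card := by
            rw [card_insert_of_notMem hbS₀, hS₀c]; omega
      _ ≤ _ := card_le_card hsub2
    · have hbX : b ∉ f ∪ f' := by rw [mem_union]; rintro (h'|h'); exacts [hbf h', hbf' h']
      have hxX : x ∉ f ∪ f' := by rw [mem_union]; rintro (h'|h'); exacts [hxf h', hxf' h']
      have hZf : f ∩ f' ⊆ f := inter_subset_left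
      have hZf' : f ∩ f' ⊆ f' := inter_subset_right
      obtain ⟨z₁, hz₁, z₂, hz₂, hz12⟩ : ∃ a ∈ f ∩ f', ∃ c ∈ f ∩ f', a ≠ c :=
        one_lt_card.mp (by omega)
      have hS₁c : ((f ∩ f').erase z₁).card = ℓ - 2 := by rw [card_erase_of_mem hz₁, hic]; omega
      have hS₂c : ((f ∩ f').erase z₂).card = ℓ - 2 := by rw [card_erase_of_mem hz₂, hic]; omega
      have hg₁ := fam _ ((erase_subset _ _).trans hZf') hS₁c
      have hg₂ := fam _ ((erase_subset _ _).trans hZf') hS₂c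
      have hxZ : x ∉ f ∩ f' := fun h' => hxf (hZf h')
      have hbZ : b ∉ f ∩ f' := fun h' => hbf (hZf h')
      have hbY' : b ∉ insert x (f ∩ f') := by simp [hbx, hbZ]
      have hYc : (insert b (insert x (f ∩ f'))).card = ℓ + 1 := by
        rw [card_insert_of_notMem hbY', card_insert_of_notMem hxZ, hic]; omega
      have hgsub : ∀ z ∈ f ∩ f', insert x (insert b ((f ∩ f').erase z)) ⊆
          insert b (insert x (f ∩ f')) := by
        intro z hzm t ht
        simp only [mem_insert] at ht ⊢
        rcases ht with rfl|rfl|ht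
        · exact Or.inr (Or.inl rfl)
        · exact Or.inl rfl
        · exact Or.inr (Or.inr (erase_subset _ _ ht))
      have hgne : insert x (insert b ((f ∩ f').erase z₁)) ≠
          insert x (insert b ((f ∩ f').erase z₂)) := by
        intro h'
        have hz₂g₁ : z₂ ∈ insert x (insert b ((f ∩ f').erase z₁)) := by
          simp only [mem_insert]
          exact Or.inr (Or.inr (mem_erase.mpr ⟨fun hh => hz12 hh.symm, hz₂⟩))
        rw [h'] at hz₂g₁
        simp only [mem_insert] at hz₂g₁
        rcases hz₂g₁ with rfl|rfl|hh
        · exact hxZ hz₂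
        · exact hbZ hz₂
        · exact (notMem_erase z₂ _) hh
      have hZ₁sub : insert x (f ∩ f') ⊆ insert b (insert x (f ∩ f')) := subset_insert _ _
      have hZ₂sub : insert b (f ∩ f') ⊆ insert b (insert x (f ∩ f')) := by
        intro t ht
        simp only [mem_insert] at ht ⊢
        rcases ht with rfl|ht
        · exact Or.inl rfl
        · exact Or.inr (Or.inr ht)
      have hZ₁c : (insert x (f ∩ f')).card = ℓ := by
        rw [card_insert_of_notMem hxZ, hic]; omega
      have hZ₂c : (insert b (f ∩ f')).card = ℓ := by
        rw [card_insert_of_notMem hbZ, hic]; omega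
      have hZZne : insert x (f ∩ f') ≠ insert b (f ∩ f') := by
        intro h'
        have : x ∈ insert b (f ∩ f') := h' ▸ mem_insert_self x _
        simp only [mem_insert] at this
        rcases this with rfl|hh
        · exact hbx rfl
        · exact hxZ hh
      rcases two_of hℓ hunif hdisp hYc hg₁ hg₂ hgne (hgsub z₁ hz₁) (hgsub z₂ hz₂)
        hZ₁sub hZ₂sub hZ₁c hZ₂c hZZne with hZE|hZE
      · refine Or.inl ⟨_, hZE, mem_insert_self x _, ?_⟩
        have hsub2 : f ∩ f' ⊆ insert x (f ∩ f') ∩ f :=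
          subset_inter (subset_insert _ _) hZf
        calc ℓ - 1 = (f ∩ f').card := hic.symm
        _ ≤ _ := card_le_card hsub2
      · -- g := insert b (f ∩ f') ∈ E; blob X' := insert b f
        have hbif : b ∉ f := hbf
        have hX'c : (insert b f).card = ℓ + 1 := by
          rw [card_insert_of_notMem hbif, hfc]
        have hgX' : insert b (f ∩ f') ⊆ insert b f := insert_subset_insert b hZf
        have hfX' : f ⊆ insert b f := subset_insert b f
        have hfg : f ≠ insert b (f ∩ f') := by
          intro h'
          exact hbif (h' ▸ mem_insert_self b _)
        have hxX' : x ∉ insert b f := by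
          simp only [mem_insert]
          rintro (rfl|h')
          · exact hbx rfl
          · exact hxf h'
        have hD₀X' : insert b ((f ∩ f').erase z₁) ⊆ insert b f :=
          insert_subset_insert b ((erase_subset _ _).trans hZf)
        have hbS₁ : b ∉ (f ∩ f').erase z₁ := fun h' => hbZ (erase_subset _ _ h')
        have hD₀c : (insert b ((f ∩ f').erase z₁)).card = ℓ - 1 := by
          rw [card_insert_of_notMem hbS₁, hS₁c]; omega
        by_cases HB : ∀ D ⊆ insert b f, D.card = ℓ - 1 → insert x D ∈ E → b ∈ D
        · refine Or.inr ⟨hxf, b, hbf, hbx, ?_⟩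
          intro S hS hSc
          exact lemD hℓ hunif hdisp hX'c hfE hZE hfg hfX' hgX' hxX'
            (mem_insert_self b f) hD₀X' hD₀c hg₁ HB S (hS.trans hfX') hSc
            (fun hbS => hbf (hS hbS))
        · push_neg at HB
          obtain ⟨D, hDX, hDc, hDE, hbD⟩ := HB
          refine Or.inl ⟨insert x D, hDE, mem_insert_self x D, ?_⟩
          have hDf : D ⊆ f := by
            intro t ht
            rcases mem_insert.mp (hDX ht) with rfl|h'
            · exact absurd ht hbD
            · exact h'
          have hsub2 : D ⊆ insert x D ∩ f := subset_inter (subset_insert x D) hDf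
          calc ℓ - 1 = D.card := hDc.symm
          _ ≤ _ := card_le_card hsub2

lemma walk_inv {V : Type*} [DecidableEq V] {ℓ : ℕ} {E : Finset (Finset V)} (hℓ : 3 ≤ ℓ)
    (hunif : ∀ e ∈ E, e.card = ℓ) (hdisp : Disperse ℓ E) {x : V}
    (es : List (Finset V)) : ∀ (hne : es ≠ []), (∀ e ∈ es, e ∈ E) →
    es.Chain' (fun a b => ℓ - 1 ≤ (a ∩ b).card) → x ∈ es.getLast hne →
    InvG ℓ E x (es.head hne) := by
  induction es with
  | nil => intro h; exact absurd rfl h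
  | cons f rest ih =>
    intro hne hmem hchain hx
    cases rest with
    | nil =>
      have hfE : f ∈ E := hmem f (by simp)
      have hxf : x ∈ f := by simpa using hx
      simp only [List.head_cons]
      exact Or.inl ⟨f, hfE, hxf, by rw [inter_self]; have := hunif f hfE; omega⟩
    | cons f' t =>
      have hchain' := List.isChain_cons_cons.mp hchain
      have hxl : x ∈ (f' :: t).getLast (by simp) := by
        rwa [List.getLast_cons (by simp : f' :: t ≠ [])] at hx
      have hInv : InvG ℓ E x ((f' :: t).head (by simp)) :=
        ih (by simp) (fun e he => hmem e (List.mem_cons_of_mem f he)) hchain'.2 hxl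
      simp only [List.head_cons] at hInv ⊢
      exact step hℓ hunif hdisp (hmem f (by simp)) (hmem f' (by simp)) hchain'.1 hInv

theorem all_subsets_in_same_component {V : Type*} [DecidableEq V] (ℓ : ℕ) (hℓ : 3 ≤ ℓ)
    (E : Finset (Finset V)) (hunif : ∀ e ∈ E, e.card = ℓ) (hdisp : Disperse ℓ E)
    (B : Finset V) (hB : B.card = ℓ)
    (A₁ A₂ : Finset V) (hA₁ : A₁ ⊆ B) (hA₂ : A₂ ⊆ B)
    (hA₁c : A₁.card = ℓ - 1) (hA₂c : A₂.card = ℓ - 1) (hne : A₁ ≠ A₂)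
    (hconn : TightConn ℓ E A₁ A₂) :
    ∀ A : Finset V, A ⊆ B → A.card = ℓ - 1 → TightConn ℓ E A₁ A := by
  intro A hA hAc
  obtain ⟨es, hnees, hesE, hchain, hA₁h, hA₂l⟩ := hconn
  set e₁ := es.head hnees with he₁def
  have he₁E : e₁ ∈ E := hesE _ (List.head_mem hnees)
  have he₁c : e₁.card = ℓ := hunif _ he₁E
  have hBA₁ : (B \ A₁).card = 1 := by rw [card_sdiff_of_subset hA₁, hB, hA₁c]; omega
  obtain ⟨x, hx⟩ := card_eq_one.mp hBA₁
  have hxm : x ∈ B \ A₁ := hx ▸ mem_singleton_self x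
  have hxB : x ∈ B := (mem_sdiff.mp hxm).1
  have hxA₁ : x ∉ A₁ := (mem_sdiff.mp hxm).2
  have hA₁eq : A₁ = B.erase x := by
    apply eq_of_subset_of_card_le
    · intro a ha; exact mem_erase.mpr ⟨fun h => hxA₁ (h ▸ ha), hA₁ ha⟩
    · rw [card_erase_of_mem hxB, hB, hA₁c]
  have hxA₂ : x ∈ A₂ := by
    by_contra hc
    have hsub : A₂ ⊆ A₁ := by
      rw [hA₁eq]
      intro a ha; exact mem_erase.mpr ⟨fun h => hc (h ▸ ha), hA₂ ha⟩
    exact hne (eq_of_subset_of_card_le hsub (by rw [hA₁c, hA₂c])).symm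
  by_cases hxA : x ∈ A
  case neg =>
    have hsub : A ⊆ A₁ := by
      rw [hA₁eq]
      intro a ha; exact mem_erase.mpr ⟨fun h => hxA (h ▸ ha), hA ha⟩
    have hAeq : A = A₁ := eq_of_subset_of_card_le hsub (by rw [hA₁c, hAc])
    exact ⟨[e₁], by simp, by simpa using he₁E, List.isChain_singleton _, by simpa using hA₁h,
      by simpa [hAeq] using hA₁h⟩
  case pos =>
  have hInv : InvG ℓ E x e₁ := walk_inv hℓ hunif hdisp es hnees hesE hchain (hA₂l hxA₂)
  have hAx : A.erase x ⊆ A₁ := by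
    rw [hA₁eq]
    intro a ha; rw [mem_erase] at ha ⊢; exact ⟨ha.1, hA ha.2⟩
  have hAxe₁ : A.erase x ⊆ e₁ := hAx.trans hA₁h
  have hAxc : (A.erase x).card = ℓ - 2 := by rw [card_erase_of_mem hxA, hAc]; omega
  rcases hInv with ⟨h, hhE, hxh, hhf⟩ | ⟨hxe₁, b, hbe₁, hbx, fam⟩
  · -- D1
    by_cases hxe₁ : x ∈ e₁
    · have hBsub : B ⊆ e₁ := by
        have hBi : B = insert x A₁ := by rw [hA₁eq, insert_erase hxB]
        rw [hBi]; exact insert_subset hxe₁ hA₁h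
      exact ⟨[e₁], by simp, by simpa using he₁E, List.isChain_singleton _, by simpa using hA₁h,
        by simpa using (hA.trans hBsub)⟩
    · have hYc : (insert x e₁).card = ℓ + 1 := by rw [card_insert_of_notMem hxe₁, he₁c]
      have hhc := hunif h hhE
      have hsub : h ∩ e₁ ⊆ h.erase x := by
        intro t ht; rw [mem_inter] at ht
        exact mem_erase.mpr ⟨fun hh => hxe₁ (hh ▸ ht.2), ht.1⟩
      have hchm : (h.erase x).card = ℓ - 1 := by rw [card_erase_of_mem hxh, hhc]
      have heq : h ∩ e₁ = h.erase x := eq_of_subset_of_card_le hsub (by omega)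
      have hhe₁ : h.erase x ⊆ e₁ := by rw [← heq]; exact inter_subset_right
      have hhY : h ⊆ insert x e₁ := by
        intro t ht
        by_cases htx : t = x
        · exact htx ▸ mem_insert_self x e₁
        · exact mem_insert_of_mem (hhe₁ (mem_erase.mpr ⟨htx, ht⟩))
      have hne1 : e₁ ≠ h := fun hh => hxe₁ (hh ▸ hxh)
      have hAY : A ⊆ insert x e₁ := by
        intro t ht
        by_cases htx : t = x
        · exact htx ▸ mem_insert_self _ _
        · exact mem_insert_of_mem (hAxe₁ (mem_erase.mpr ⟨htx, ht⟩))
      have hYA : ((insert x e₁) \ A).card = 2 := by rw [card_sdiff_of_subset hAY, hYc, hAc]; omega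
      obtain ⟨c₁, c₂, hc12, hpair⟩ := card_eq_two.mp hYA
      have key : ∀ c, c ∈ (insert x e₁) \ A → (insert x e₁).erase c ∈ E →
          TightConn ℓ E A₁ A := by
        intro c hc hU
        have hcY := (mem_sdiff.mp hc).1
        have hcA := (mem_sdiff.mp hc).2
        have hAU : A ⊆ (insert x e₁).erase c := fun t ht =>
          mem_erase.mpr ⟨fun hh => hcA (hh ▸ ht), hAY ht⟩
        have hUc : ((insert x e₁).erase c).card = ℓ := by
          rw [card_erase_of_mem hcY, hYc]; omega
        have hinter : ℓ - 1 ≤ (e₁ ∩ (insert x e₁).erase c).card :=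
          inter_card_ge hYc (subset_insert x e₁) (erase_subset _ _) he₁c hUc
        refine ⟨[e₁, (insert x e₁).erase c], by simp, ?_, ?_, by simpa using hA₁h, ?_⟩
        · intro e he
          simp only [List.mem_cons, List.not_mem_nil, or_false] at he
          rcases he with rfl|rfl
          · exact he₁E
          · exact hU
        · exact List.isChain_cons_cons.mpr ⟨hinter, List.isChain_singleton _⟩
        · simpa using hAU
      have hc₁m : c₁ ∈ (insert x e₁) \ A := by rw [hpair]; exact mem_insert_self _ _
      have hc₂m : c₂ ∈ (insert x e₁) \ A := by
        rw [hpair]; exact mem_insert_of_mem (mem_singleton_self _)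
      have herane : (insert x e₁).erase c₁ ≠ (insert x e₁).erase c₂ := by
        intro hh
        have : c₂ ∈ (insert x e₁).erase c₁ :=
          mem_erase.mpr ⟨hc12.symm, (mem_sdiff.mp hc₂m).1⟩
        rw [hh] at this
        exact (notMem_erase c₂ _) this
      have hcard1 : ((insert x e₁).erase c₁).card = ℓ := by
        rw [card_erase_of_mem (mem_sdiff.mp hc₁m).1, hYc]; omega
      have hcard2 : ((insert x e₁).erase c₂).card = ℓ := by
        rw [card_erase_of_mem (mem_sdiff.mp hc₂m).1, hYc]; omega
      rcases two_of hℓ hunif hdisp hYc he₁E hhE hne1 (subset_insert x e₁) hhY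
        (erase_subset _ _) (erase_subset _ _) hcard1 hcard2 herane with hE|hE
      · exact key c₁ hc₁m hE
      · exact key c₂ hc₂m hE
  · -- D2
    have hbx' : b ≠ x := hbx
    obtain ⟨c, hc⟩ : (e₁ \ A.erase x).Nonempty := by
      apply card_pos.mp
      rw [card_sdiff_of_subset hAxe₁, he₁c, hAxc]; omega
    have hce₁ : c ∈ e₁ := (mem_sdiff.mp hc).1
    have hcAx : c ∉ A.erase x := (mem_sdiff.mp hc).2
    obtain ⟨s, hs⟩ : (A.erase x).Nonempty := card_pos.mp (by omega)
    have hxc : x ≠ c := fun h => hxe₁ (h ▸ hce₁)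
    have hbc : b ≠ c := fun h => hbe₁ (h ▸ hce₁)
    have hxAx : x ∉ A.erase x := notMem_erase x A
    have hbAx : b ∉ A.erase x := fun h => hbe₁ (hAxe₁ h)
    -- Y := insert b (insert x (insert c (A.erase x)))
    have hxicA : x ∉ insert c (A.erase x) := by simp [hxc, hxAx]
    have hbiA : b ∉ insert x (insert c (A.erase x)) := by simp [hbx, hbc, hbAx]
    have hcicA : (insert c (A.erase x)).card = ℓ - 1 := by
      rw [card_insert_of_notMem hcAx, hAxc]; omega
    have hYc : (insert b (insert x (insert c (A.erase x)))).card = ℓ + 1 := by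
      rw [card_insert_of_notMem hbiA, card_insert_of_notMem hxicA, hcicA]; omega
    have hg₁ := fam (A.erase x) hAxe₁ hAxc
    set S' := insert c ((A.erase x).erase s) with hS'def
    have hS'e₁ : S' ⊆ e₁ := insert_subset hce₁ ((erase_subset _ _).trans hAxe₁)
    have hcAxs : c ∉ (A.erase x).erase s := fun h => hcAx (erase_subset _ _ h)
    have hS'c : S'.card = ℓ - 2 := by
      rw [hS'def, card_insert_of_notMem hcAxs, card_erase_of_mem hs, hAxc]; omega
    have hg₂ := fam S' hS'e₁ hS'c
    have hse₁ : s ∈ e₁ := hAxe₁ hs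
    have hsx : s ≠ x := fun h => hxe₁ (h ▸ hse₁)
    have hsb : s ≠ b := fun h => hbe₁ (h ▸ hse₁)
    have hsc : s ≠ c := fun h => hcAx (h ▸ hs)
    have hgne : insert x (insert b (A.erase x)) ≠ insert x (insert b S') := by
      intro hh
      have hsg : s ∈ insert x (insert b S') := by
        rw [← hh]; simp only [mem_insert]; exact Or.inr (Or.inr hs)
      simp only [hS'def, mem_insert] at hsg
      rcases hsg with h'|h'|h'|h'
      · exact hsx h'
      · exact hsb h'
      · exact hsc h'
      · exact (notMem_erase s _) h'
    have hg₁sub : insert x (insert b (A.erase x)) ⊆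
        insert b (insert x (insert c (A.erase x))) := by
      intro t ht
      simp only [mem_insert] at ht ⊢
      rcases ht with rfl|rfl|ht
      · exact Or.inr (Or.inl rfl)
      · exact Or.inl rfl
      · exact Or.inr (Or.inr (Or.inr ht))
    have hg₂sub : insert x (insert b S') ⊆
        insert b (insert x (insert c (A.erase x))) := by
      intro t ht
      simp only [hS'def, mem_insert] at ht ⊢
      rcases ht with rfl|rfl|rfl|ht
      · exact Or.inr (Or.inl rfl)
      · exact Or.inl rfl
      · exact Or.inr (Or.inr (Or.inl rfl))
      · exact Or.inr (Or.inr (Or.inr (erase_subset _ _ ht)))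
    have hZ₁sub : insert b (insert c (A.erase x)) ⊆
        insert b (insert x (insert c (A.erase x))) := by
      intro t ht
      simp only [mem_insert] at ht ⊢
      rcases ht with rfl|rfl|ht
      · exact Or.inl rfl
      · exact Or.inr (Or.inr (Or.inl rfl))
      · exact Or.inr (Or.inr (Or.inr ht))
    have hZ₂sub : insert x (insert c (A.erase x)) ⊆
        insert b (insert x (insert c (A.erase x))) := subset_insert _ _
    have hbicA : b ∉ insert c (A.erase x) := by simp [hbc, hbAx]
    have hZ₁c : (insert b (insert c (A.erase x))).card = ℓ := by
      rw [card_insert_of_notMem hbicA, hcicA]; omega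
    have hZ₂c : (insert x (insert c (A.erase x))).card = ℓ := by
      rw [card_insert_of_notMem hxicA, hcicA]; omega
    have hZne : insert b (insert c (A.erase x)) ≠ insert x (insert c (A.erase x)) := by
      intro hh
      have : x ∈ insert b (insert c (A.erase x)) := hh ▸ mem_insert_self x _
      simp only [mem_insert] at this
      rcases this with h'|h'|h'
      · exact hbx h'.symm
      · exact hxc h'
      · exact hxAx h'
    have hAsub : A ⊆ insert x (A.erase x) := by rw [insert_erase hxA]
    rcases two_of hℓ hunif hdisp hYc hg₁ hg₂ hgne hg₁sub hg₂sub hZ₁sub hZ₂sub hZ₁c hZ₂c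
      hZne with hE|hE
    · -- Z₁ = insert b (insert c (A.erase x)) ∈ E : walk [e₁, Z₁, g₁]
      have hint1 : ℓ - 1 ≤ (e₁ ∩ insert b (insert c (A.erase x))).card := by
        have hss : insert c (A.erase x) ⊆ e₁ ∩ insert b (insert c (A.erase x)) :=
          subset_inter (insert_subset hce₁ hAxe₁) (subset_insert _ _)
        calc ℓ - 1 = (insert c (A.erase x)).card := hcicA.symm
        _ ≤ _ := card_le_card hss
      have hint2 : ℓ - 1 ≤ ((insert b (insert c (A.erase x))) ∩
          insert x (insert b (A.erase x))).card := by
        have hss : insert b (A.erase x) ⊆ (insert b (insert c (A.erase x))) ∩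
            insert x (insert b (A.erase x)) := by
          apply subset_inter
          · intro t ht
            simp only [mem_insert] at ht ⊢
            rcases ht with rfl|ht
            · exact Or.inl rfl
            · exact Or.inr (Or.inr ht)
          · exact subset_insert _ _
        have hcbA : (insert b (A.erase x)).card = ℓ - 1 := by
          rw [card_insert_of_notMem hbAx, hAxc]; omega
        calc ℓ - 1 = (insert b (A.erase x)).card := hcbA.symm
        _ ≤ _ := card_le_card hss
      have hAg₁ : A ⊆ insert x (insert b (A.erase x)) := by
        intro t ht
        by_cases htx : t = x
        · exact htx ▸ mem_insert_self _ _
        · exact mem_insert_of_mem (mem_insert_of_mem (mem_erase.mpr ⟨htx, ht⟩))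
      refine ⟨[e₁, insert b (insert c (A.erase x)), insert x (insert b (A.erase x))],
        by simp, ?_, ?_, by simpa using hA₁h, ?_⟩
      · intro e he
        simp only [List.mem_cons, List.not_mem_nil, or_false] at he
        rcases he with rfl|rfl|rfl
        · exact he₁E
        · exact hE
        · exact hg₁
      · exact List.isChain_cons_cons.mpr ⟨hint1, List.isChain_cons_cons.mpr ⟨hint2, List.isChain_singleton _⟩⟩
      · simpa using hAg₁
    · -- Z₂ = insert x (insert c (A.erase x)) ∈ E : walk [e₁, Z₂]
      have hint1 : ℓ - 1 ≤ (e₁ ∩ insert x (insert c (A.erase x))).card := by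
        have hss : insert c (A.erase x) ⊆ e₁ ∩ insert x (insert c (A.erase x)) :=
          subset_inter (insert_subset hce₁ hAxe₁) (subset_insert _ _)
        calc ℓ - 1 = (insert c (A.erase x)).card := hcicA.symm
        _ ≤ _ := card_le_card hss
      have hAZ₂ : A ⊆ insert x (insert c (A.erase x)) := by
        intro t ht
        by_cases htx : t = x
        · exact htx ▸ mem_insert_self _ _
        · exact mem_insert_of_mem (mem_insert_of_mem (mem_erase.mpr ⟨htx, ht⟩))
      refine ⟨[e₁, insert x (insert c (A.erase x))], by simp, ?_, ?_,
        by simpa using hA₁h, ?_⟩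
      · intro e he
        simp only [List.mem_cons, List.not_mem_nil, or_false] at he
        rcases he with rfl|rfl
        · exact he₁E
        · exact hE
      · exact List.isChain_cons_cons.mpr ⟨hint1, List.isChain_singleton _⟩
      · simpa using hAZ₂
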